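/- For even n ≥ 4, the 2×n grid graph L_{2,n} satisfies DL(L_{2,n}) = n/2 = r(L_{2,n}) − 1. -/

import Mathlib

/-- `G` admits a `k`-dispersed labelling. -/
def HasDispersedLabelling {V : Type*} [Fintype V] (G : SimpleGraph V) (k : ℕ) : Prop :=
  ∃ φ : Fin (Fintype.card V) ≃ V,
    ∀ i j : Fin (Fintype.card V), (j : ℕ) = (i : ℕ) + 1 → k ≤ G.dist (φ i) (φ j)

/-- `DL G`: the maximum `k` such that `G` admits a `k`-dispersed labelling. -/
noncomputable def DL {V : Type*} [Fintype V] (G : SimpleGraph V) : ℕ :=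
  sSup {k | HasDispersedLabelling G k}

/-- The eccentricity of a vertex: the maximum distance to another vertex. -/
noncomputable def eccent {V : Type*} [Fintype V] (G : SimpleGraph V) (v : V) : ℕ :=
  Finset.univ.sup (fun u => G.dist v u)

/-- The radius of a graph: the minimum eccentricity of a vertex. -/
noncomputable def graphRadius {V : Type*} [Fintype V] (G : SimpleGraph V) : ℕ :=
  sInf (Set.range (eccent G))

/-- The `m × n` grid graph, as the box product of two path graphs. -/
def gridGraph (m n : ℕ) : SimpleGraph (Fin m × Fin n) :=
  SimpleGraph.boxProd (SimpleGraph.pathGraph m) (SimpleGraph.pathGraph n)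

open SimpleGraph

/-- a walk in the path graph going up k steps -/
lemma pathGraph_walk_up (n : ℕ) : ∀ (k : ℕ) (i j : Fin n), (j : ℕ) = (i : ℕ) + k →
    ∃ w : (pathGraph n).Walk i j, w.length = k := by
  intro k
  induction k with
  | zero => intro i j h; obtain rfl : i = j := Fin.ext (by omega); exact ⟨.nil, rfl⟩
  | succ k ih =>
    intro i j h
    have hi1 : (i : ℕ) + 1 < n := by omega
    have hadj : (pathGraph n).Adj i ⟨i + 1, hi1⟩ := by
      rw [pathGraph_adj]; left; rfl
    obtain ⟨w, hw⟩ := ih ⟨i + 1, hi1⟩ j (by simp; omega)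
    exact ⟨.cons hadj w, by simp [hw]⟩

lemma pathGraph_walk (n : ℕ) (i j : Fin n) :
    ∃ w : (pathGraph n).Walk i j, w.length = Nat.dist i j := by
  rcases le_total (i : ℕ) (j : ℕ) with h | h
  · obtain ⟨w, hw⟩ := pathGraph_walk_up n ((j : ℕ) - i) i j (by omega)
    exact ⟨w, by rw [hw, Nat.dist]; omega⟩
  · obtain ⟨w, hw⟩ := pathGraph_walk_up n ((i : ℕ) - j) j i (by omega)
    exact ⟨w.reverse, by rw [SimpleGraph.Walk.length_reverse, hw, Nat.dist]; omega⟩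

/-- distance lower bound along any walk in the grid -/
lemma grid_walk_ge (n : ℕ) : ∀ (u v : Fin 2 × Fin n) (w : (gridGraph 2 n).Walk u v),
    Nat.dist u.1 v.1 + Nat.dist u.2 v.2 ≤ w.length := by
  intro u v w
  induction w with
  | nil => simp [Nat.dist]
  | @cons a b c hadj w ih =>
    rw [SimpleGraph.Walk.length_cons]
    have : Nat.dist a.1 b.1 + Nat.dist a.2 b.2 = 1 := by
      rcases hadj with ⟨h1, h2⟩ | ⟨h1, h2⟩
      · rw [pathGraph_adj] at h1
        have : (a.2 : ℕ) = (b.2 : ℕ) := by rw [h2]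
        simp only [Nat.dist]; omega
      · rw [pathGraph_adj] at h1
        have : (a.1 : ℕ) = (b.1 : ℕ) := by rw [h2]
        simp only [Nat.dist]; omega
    have t1 := Nat.dist.triangle_inequality (a.1 : ℕ) (b.1 : ℕ) (c.1 : ℕ)
    have t2 := Nat.dist.triangle_inequality (a.2 : ℕ) (b.2 : ℕ) (c.2 : ℕ)
    omega

lemma grid_dist (n : ℕ) (u v : Fin 2 × Fin n) :
    (gridGraph 2 n).dist u v = Nat.dist u.1 v.1 + Nat.dist u.2 v.2 := by
  obtain ⟨w1, hw1⟩ := pathGraph_walk 2 u.1 v.1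
  obtain ⟨w2, hw2⟩ := pathGraph_walk n u.2 v.2
  let wa : (pathGraph 2 □ pathGraph n).Walk (u.1, u.2) (v.1, u.2) :=
    w1.boxProdLeft (pathGraph n) u.2
  let wb : (pathGraph 2 □ pathGraph n).Walk (v.1, u.2) (v.1, v.2) :=
    SimpleGraph.Walk.boxProdRight _ v.1 w2
  obtain ⟨wgrid, hlen⟩ : ∃ w : (gridGraph 2 n).Walk u v,
      w.length = Nat.dist u.1 v.1 + Nat.dist u.2 v.2 := by
    refine ⟨(wa.append wb).copy (by simp) (by simp), ?_⟩
    show ((wa.append wb).copy (by simp) (by simp) : (pathGraph 2 □ pathGraph n).Walk u v).length = _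
    have la : wa.length = w1.length := SimpleGraph.Walk.length_map _ _
    have lb : wb.length = w2.length := SimpleGraph.Walk.length_map _ _
    rw [SimpleGraph.Walk.length_copy, SimpleGraph.Walk.length_append, la, lb, hw1, hw2]
  refine le_antisymm (hlen ▸ SimpleGraph.dist_le wgrid) ?_
  have hr : (gridGraph 2 n).Reachable u v := ⟨wgrid⟩
  obtain ⟨p, hp⟩ := hr.exists_walk_length_eq_dist
  rw [← hp]
  exact grid_walk_ge n u v p

lemma grid_lower (n m : ℕ) (hm : 2 ≤ m) (hnm : n = 2 * m) :
    HasDispersedLabelling (gridGraph 2 n) m := by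
  have hcard : Fintype.card (Fin 2 × Fin n) = 4 * m := by
    simp [hnm]; ring
  have hmod : ∀ a : ℕ, a % 4 % 2 = a % 2 := fun a => Nat.mod_mod_of_dvd a (by norm_num)
  set f : Fin (Fintype.card (Fin 2 × Fin n)) → Fin 2 × Fin n := fun i =>
    (⟨i.val % 4 / 2, by omega⟩,
     ⟨i.val / 4 + (i.val % 2) * m, by
        have h : (i : ℕ) < 4 * m := lt_of_lt_of_le i.isLt hcard.le
        have h2 : i.val % 2 = 0 ∨ i.val % 2 = 1 := by omega
        rcases h2 with h2 | h2 <;> rw [h2] <;> omega⟩) with hf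
  have hinj : Function.Injective f := by
    intro a b hab
    rw [Prod.ext_iff, Fin.ext_iff, Fin.ext_iff] at hab
    obtain ⟨h1, h2⟩ := hab
    simp only [hf] at h1 h2
    have ha : (a : ℕ) < 4 * m := lt_of_lt_of_le a.isLt hcard.le
    have hb : (b : ℕ) < 4 * m := lt_of_lt_of_le b.isLt hcard.le
    have hma := hmod a.val; have hmb := hmod b.val
    have e2 : a.val % 2 = 0 ∨ a.val % 2 = 1 := by omega
    have e3 : b.val % 2 = 0 ∨ b.val % 2 = 1 := by omega
    apply Fin.ext
    rcases e2 with e2 | e2 <;> rcases e3 with e3 | e3 <;> rw [e2, e3] at h2 <;>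
      simp at h2 <;> omega
  refine ⟨Equiv.ofBijective f ((Fintype.bijective_iff_injective_and_card f).mpr
    ⟨hinj, by simp⟩), ?_⟩
  intro i j hij
  have hiv : (i : ℕ) < 4 * m := lt_of_lt_of_le i.isLt hcard.le
  rw [grid_dist]
  show m ≤ Nat.dist (f i).1 (f j).1 + Nat.dist (f i).2 (f j).2
  simp only [hf]
  rw [hij]
  simp only [Nat.dist]
  have ht : i.val % 4 = 0 ∨ i.val % 4 = 1 ∨ i.val % 4 = 2 ∨ i.val % 4 = 3 := by omega
  have hma := hmod i.val; have hmb := hmod (i.val + 1)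
  rcases ht with ht | ht | ht | ht <;>
  · have e1 : i.val % 2 = i.val % 4 % 2 := (hmod _).symm
    have e2 : (i.val + 1) % 2 = (i.val + 1) % 4 % 2 := (hmod _).symm
    have e4 : (i.val + 1) % 4 = (i.val % 4 + 1) % 4 := by omega
    rw [e1, e2, e4, ht]
    norm_num
    omega

lemma grid_far (n m : ℕ) (hm : 2 ≤ m) (hnm : n = 2 * m) (a : Fin 2) (c : Fin n)
    (hc : c.val = m - 1 ∨ c.val = m) (v : Fin 2 × Fin n)
    (hv : m + 1 ≤ (gridGraph 2 n).dist (a, c) v) :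
    v.1.val = 1 - a.val ∧ v.2.val = (if c.val = m then 0 else n - 1) := by
  rw [grid_dist] at hv
  have h1 := a.isLt; have h3 := v.1.isLt; have h4 := v.2.isLt
  simp only [Nat.dist] at hv
  rcases hc with hc | hc
  · rw [if_neg (by omega)]; omega
  · rw [if_pos hc]; omega

lemma grid_upper (n m : ℕ) (hm : 2 ≤ m) (hnm : n = 2 * m) :
    ¬ HasDispersedLabelling (gridGraph 2 n) (m + 1) := by
  rintro ⟨φ, hφ⟩
  have hcard : Fintype.card (Fin 2 × Fin n) = 4 * m := by simp [hnm]; ring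
  have main : ∀ (a : Fin 2) (c : Fin n), c.val = m - 1 ∨ c.val = m →
      (φ.symm (a, c)).val = 0 ∨ (φ.symm (a, c)).val = Fintype.card (Fin 2 × Fin n) - 1 := by
    intro a c hc
    by_contra hcon
    push_neg at hcon
    obtain ⟨hc0, hcN⟩ := hcon
    set i := φ.symm (a, c) with hi
    have hiv : (i : ℕ) < Fintype.card (Fin 2 × Fin n) := i.isLt
    have hprev : (i : ℕ) - 1 < Fintype.card (Fin 2 × Fin n) := by omega
    have hnext : (i : ℕ) + 1 < Fintype.card (Fin 2 × Fin n) := by omega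
    set ip : Fin (Fintype.card (Fin 2 × Fin n)) := ⟨(i : ℕ) - 1, hprev⟩
    set iq : Fin (Fintype.card (Fin 2 × Fin n)) := ⟨(i : ℕ) + 1, hnext⟩
    have hφi : φ i = (a, c) := Equiv.apply_symm_apply φ _
    have d1 : m + 1 ≤ (gridGraph 2 n).dist (a, c) (φ ip) := by
      rw [SimpleGraph.dist_comm, ← hφi]
      exact hφ ip i (by simp [ip]; omega)
    have d2 : m + 1 ≤ (gridGraph 2 n).dist (a, c) (φ iq) := by
      rw [← hφi]
      exact hφ i iq (by simp [iq])
    have e1 := grid_far n m hm hnm a c hc _ d1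
    have e2 := grid_far n m hm hnm a c hc _ d2
    have : φ ip = φ iq := by
      apply Prod.ext <;> apply Fin.ext <;> omega
    have : ip = iq := φ.injective this
    have h2 := Fin.ext_iff.mp this
    simp only [ip, iq] at h2
    omega
  have hm1 : m - 1 < n := by omega
  have hmn : m < n := by omega
  have k1 := main ⟨0, by omega⟩ ⟨m - 1, hm1⟩ (Or.inl rfl)
  have k2 := main ⟨1, by omega⟩ ⟨m - 1, hm1⟩ (Or.inl rfl)
  have k3 := main ⟨0, by omega⟩ ⟨m, hmn⟩ (Or.inr rfl)
  have k4 := main ⟨1, by omega⟩ ⟨m, hmn⟩ (Or.inr rfl)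
  have ne12 : φ.symm (⟨0, by omega⟩, ⟨m - 1, hm1⟩) ≠ φ.symm (⟨1, by omega⟩, ⟨m - 1, hm1⟩) := by
    simp only [ne_eq, EmbeddingLike.apply_eq_iff_eq, Prod.mk.injEq, Fin.mk.injEq]
    omega
  have ne13 : φ.symm (⟨0, by omega⟩, ⟨m - 1, hm1⟩) ≠ φ.symm (⟨0, by omega⟩, ⟨m, hmn⟩) := by
    simp only [ne_eq, EmbeddingLike.apply_eq_iff_eq, Prod.mk.injEq, Fin.mk.injEq]
    omega
  have ne23 : φ.symm (⟨1, by omega⟩, ⟨m - 1, hm1⟩) ≠ φ.symm (⟨0, by omega⟩, ⟨m, hmn⟩) := by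
    simp only [ne_eq, EmbeddingLike.apply_eq_iff_eq, Prod.mk.injEq, Fin.mk.injEq]
    omega
  have v12 : ((φ.symm (⟨0, by omega⟩, ⟨m - 1, hm1⟩)) : ℕ) ≠ (φ.symm (⟨1, by omega⟩, ⟨m - 1, hm1⟩) : ℕ) :=
    fun h => ne12 (Fin.ext h)
  have v13 : ((φ.symm (⟨0, by omega⟩, ⟨m - 1, hm1⟩)) : ℕ) ≠ (φ.symm (⟨0, by omega⟩, ⟨m, hmn⟩) : ℕ) :=
    fun h => ne13 (Fin.ext h)
  have v23 : ((φ.symm (⟨1, by omega⟩, ⟨m - 1, hm1⟩)) : ℕ) ≠ (φ.symm (⟨0, by omega⟩, ⟨m, hmn⟩) : ℕ) :=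
    fun h => ne23 (Fin.ext h)
  omega

lemma grid_radius (n m : ℕ) (hm : 2 ≤ m) (hnm : n = 2 * m) :
    graphRadius (gridGraph 2 n) = m + 1 := by
  have lb : ∀ v : Fin 2 × Fin n, m + 1 ≤ _root_.eccent (gridGraph 2 n) v := by
    intro v
    have hv1 := v.1.isLt; have hv2 := v.2.isLt
    have e0 : (gridGraph 2 n).dist v (⟨1 - v.1.val, by omega⟩, ⟨0, by omega⟩) ≤
        _root_.eccent (gridGraph 2 n) v := Finset.le_sup (Finset.mem_univ _)
    have e1 : (gridGraph 2 n).dist v (⟨1 - v.1.val, by omega⟩, ⟨n - 1, by omega⟩) ≤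
        _root_.eccent (gridGraph 2 n) v := Finset.le_sup (Finset.mem_univ _)
    rw [grid_dist] at e0 e1
    simp only [Nat.dist] at e0 e1
    omega
  have hub : _root_.eccent (gridGraph 2 n) (⟨0, by omega⟩, ⟨m - 1, by omega⟩) ≤ m + 1 := by
    apply Finset.sup_le
    intro u _
    rw [grid_dist]
    have := u.1.isLt; have := u.2.isLt
    simp only [Nat.dist]
    omega
  have hecc : _root_.eccent (gridGraph 2 n) (⟨0, by omega⟩, ⟨m - 1, by omega⟩) = m + 1 :=
    le_antisymm hub (lb _)
  apply le_antisymm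
  · exact le_trans (Nat.sInf_le ⟨_, rfl⟩) hub
  · refine le_csInf ⟨_root_.eccent (gridGraph 2 n) (⟨0, by omega⟩, ⟨m - 1, by omega⟩), ⟨_, rfl⟩⟩ ?_
    rintro b ⟨v, rfl⟩
    exact lb v

theorem DL_grid_two_rows_even (n : ℕ) (hn : 4 ≤ n) (heven : Even n) :
    DL (gridGraph 2 n) = n / 2 ∧
      DL (gridGraph 2 n) = graphRadius (gridGraph 2 n) - 1 := by
  obtain ⟨m, hnm⟩ := heven
  have hnm : n = 2 * m := by omega
  have hm : 2 ≤ m := by omega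
  have hmem : HasDispersedLabelling (gridGraph 2 n) m := grid_lower n m hm hnm
  have hub : ∀ k ∈ {k | HasDispersedLabelling (gridGraph 2 n) k}, k ≤ m := by
    intro k hk
    by_contra hlt
    push_neg at hlt
    obtain ⟨φ, hφ⟩ := hk
    exact grid_upper n m hm hnm ⟨φ, fun i j h => le_trans (by omega) (hφ i j h)⟩
  have hDL : DL (gridGraph 2 n) = m :=
    le_antisymm (csSup_le ⟨m, hmem⟩ hub) (le_csSup ⟨m, hub⟩ hmem)
  rw [hDL, grid_radius n m hm hnm]
  omega
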